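/- Let r ≥ 1 be an integer and A, M > 0 constants. Then there exists a constant C > 0, depending only on r, A, and M, with the following property. Let [c,d] be an interval with h := d − c satisfying 0 < h ≤ 1, let f : ℝ → ℝ be r times continuously differentiable on [c,d] with |f^{(l)}(x)| ≤ M for all x ∈ [c,d] and all l = 0, …, r, and let p be a polynomial such that |f^{(l)}(x) − p^{(l)}(x)| ≤ A·h^{r+1−l} for all x ∈ [c,d] and all l = 0, …, r. Then |I_{[c,d]}(f) − I_{[c,d]}(p)| ≤ C·h^{r+1}, where I_{[c,d]}(g) = Σ_{l=1}^{r} h^{2l−1} ∫_c^d (g^{(l)}(x))² dx. -/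

import Mathlib

private lemma poly_contDiff (p : Polynomial ℝ) (n : ℕ) : ContDiff ℝ n (fun x => p.eval x) := by
  induction p using Polynomial.induction_on' with
  | add p q hp hq => simpa [Polynomial.eval_add] using hp.add hq
  | monomial n a => simpa [Polynomial.eval_monomial] using (contDiff_const (c := a)).mul (contDiff_id.pow n)

theorem stmt18 (r : ℕ) (hr : 1 ≤ r) (A M : ℝ) (hA : 0 < A) (hM : 0 < M) :
    ∃ C > 0, ∀ (c d : ℝ) (f : ℝ → ℝ) (p : Polynomial ℝ),
      c < d → d - c ≤ 1 →
      ContDiffOn ℝ r f (Set.Icc c d) →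
      (∀ l : ℕ, l ≤ r → ∀ x ∈ Set.Icc c d,
        |iteratedDerivWithin l f (Set.Icc c d) x| ≤ M) →
      (∀ l : ℕ, l ≤ r → ∀ x ∈ Set.Icc c d,
        |iteratedDerivWithin l f (Set.Icc c d) x -
            iteratedDerivWithin l (fun y => Polynomial.eval y p) (Set.Icc c d) x|
          ≤ A * (d - c) ^ (r + 1 - l)) →
      |(∑ l ∈ Finset.Icc 1 r, (d - c) ^ (2 * l - 1) *
            ∫ x in c..d, (iteratedDerivWithin l f (Set.Icc c d) x) ^ 2) -
          ∑ l ∈ Finset.Icc 1 r, (d - c) ^ (2 * l - 1) *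
            ∫ x in c..d, (iteratedDerivWithin l (fun y => Polynomial.eval y p) (Set.Icc c d) x) ^ 2|
        ≤ C * (d - c) ^ (r + 1) := by
  have hr0 : (0:ℝ) < r := by exact_mod_cast hr
  refine ⟨r * (A * (2 * M + A)), by positivity, ?_⟩
  intro c d f p hcd hle hf hfb hfp
  set h := d - c with hh
  have hh0 : 0 < h := by simp [hh]; linarith
  have hh1 : h ≤ 1 := hle
  have hud : UniqueDiffOn ℝ (Set.Icc c d) := uniqueDiffOn_Icc hcd
  have hp : ContDiffOn ℝ r (fun y => p.eval y) (Set.Icc c d) :=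
    (poly_contDiff p r).contDiffOn
  have hpow1 : ∀ k : ℕ, h ^ k ≤ 1 := fun k => pow_le_one₀ hh0.le hh1
  -- bound on p's derivatives
  have hpb : ∀ l : ℕ, l ≤ r → ∀ x ∈ Set.Icc c d,
      |iteratedDerivWithin l (fun y => p.eval y) (Set.Icc c d) x| ≤ M + A := by
    intro l hl x hx
    have h1 := hfb l hl x hx
    have h2 := hfp l hl x hx
    have h3 : A * h ^ (r + 1 - l) ≤ A := by
      nlinarith [hpow1 (r + 1 - l)]
    have h4 := abs_sub_abs_le_abs_sub
      (iteratedDerivWithin l (fun y => p.eval y) (Set.Icc c d) x)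
      (iteratedDerivWithin l f (Set.Icc c d) x)
    rw [abs_sub_comm] at h4
    linarith
  have hIcc : Set.uIcc c d = Set.Icc c d := Set.uIcc_of_le hcd.le
  have hIoc : Set.uIoc c d = Set.Ioc c d := Set.uIoc_of_le hcd.le
  have hterm : ∀ l ∈ Finset.Icc 1 r,
      |h ^ (2*l-1) * (∫ x in c..d, (iteratedDerivWithin l f (Set.Icc c d) x)^2)
       - h ^ (2*l-1) * ∫ x in c..d, (iteratedDerivWithin l (fun y => p.eval y) (Set.Icc c d) x)^2|
      ≤ A * (2*M+A) * h ^ (r+1) := by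
    intro l hl
    obtain ⟨hl1, hlr⟩ := Finset.mem_Icc.mp hl
    set F := iteratedDerivWithin l f (Set.Icc c d) with hF
    set P := iteratedDerivWithin l (fun y => p.eval y) (Set.Icc c d) with hP
    have hFc : ContinuousOn F (Set.Icc c d) :=
      hf.continuousOn_iteratedDerivWithin (by exact_mod_cast hlr) hud
    have hPc : ContinuousOn P (Set.Icc c d) :=
      hp.continuousOn_iteratedDerivWithin (by exact_mod_cast hlr) hud
    have hFi : IntervalIntegrable (fun x => F x ^ 2) MeasureTheory.volume c d := by
      apply ContinuousOn.intervalIntegrable; rw [hIcc]; exact hFc.pow 2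
    have hPi : IntervalIntegrable (fun x => P x ^ 2) MeasureTheory.volume c d := by
      apply ContinuousOn.intervalIntegrable; rw [hIcc]; exact hPc.pow 2
    rw [← mul_sub, ← intervalIntegral.integral_sub hFi hPi, abs_mul, abs_pow, abs_of_pos hh0]
    have hint : |∫ x in c..d, (F x ^ 2 - P x ^ 2)| ≤ (A * h^(r+1-l) * (2*M+A)) * h := by
      have hb : ∀ x ∈ Set.uIoc c d, ‖F x ^ 2 - P x ^ 2‖ ≤ A * h^(r+1-l) * (2*M+A) := by
        intro x hx
        rw [hIoc] at hx
        have hx' : x ∈ Set.Icc c d := Set.Ioc_subset_Icc_self hx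
        have h1 := hfb l hlr x hx'
        have h2 := hfp l hlr x hx'
        have h3 := hpb l hlr x hx'
        have e : F x ^ 2 - P x ^ 2 = (F x - P x) * (F x + P x) := by ring
        rw [Real.norm_eq_abs, e, abs_mul]
        have h5 : |F x + P x| ≤ 2*M + A := by
          have h6 := abs_add_le (F x) (P x); linarith
        exact mul_le_mul h2 h5 (abs_nonneg _) (by positivity)
      have := intervalIntegral.norm_integral_le_of_norm_le_const hb
      rw [Real.norm_eq_abs] at this
      calc |∫ x in c..d, (F x ^ 2 - P x ^ 2)| ≤ (A * h^(r+1-l) * (2*M+A)) * |d - c| := this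
        _ = (A * h^(r+1-l) * (2*M+A)) * h := by rw [← hh, abs_of_pos hh0]
    calc h ^ (2*l-1) * |∫ x in c..d, (F x ^ 2 - P x ^ 2)|
        ≤ h ^ (2*l-1) * ((A * h^(r+1-l) * (2*M+A)) * h) := by
          exact mul_le_mul_of_nonneg_left hint (by positivity)
      _ = A * (2*M+A) * (h^(2*l-1) * h^(r+1-l) * h) := by ring
      _ = A * (2*M+A) * h^(r+l+1) := by
          rw [← pow_add, ← pow_succ]
          congr 2
          omega
      _ ≤ A * (2*M+A) * h^(r+1) := by
          apply mul_le_mul_of_nonneg_left _ (by positivity)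
          exact pow_le_pow_of_le_one hh0.le hh1 (by omega)
  calc |(∑ l ∈ Finset.Icc 1 r, h ^ (2 * l - 1) *
            ∫ x in c..d, (iteratedDerivWithin l f (Set.Icc c d) x) ^ 2) -
          ∑ l ∈ Finset.Icc 1 r, h ^ (2 * l - 1) *
            ∫ x in c..d, (iteratedDerivWithin l (fun y => Polynomial.eval y p) (Set.Icc c d) x) ^ 2|
      = |∑ l ∈ Finset.Icc 1 r, (h ^ (2 * l - 1) *
            (∫ x in c..d, (iteratedDerivWithin l f (Set.Icc c d) x) ^ 2) -
          h ^ (2 * l - 1) *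
            ∫ x in c..d, (iteratedDerivWithin l (fun y => Polynomial.eval y p) (Set.Icc c d) x) ^ 2)| := by
        rw [Finset.sum_sub_distrib]
    _ ≤ ∑ l ∈ Finset.Icc 1 r, |h ^ (2 * l - 1) *
            (∫ x in c..d, (iteratedDerivWithin l f (Set.Icc c d) x) ^ 2) -
          h ^ (2 * l - 1) *
            ∫ x in c..d, (iteratedDerivWithin l (fun y => Polynomial.eval y p) (Set.Icc c d) x) ^ 2| :=
        Finset.abs_sum_le_sum_abs _ _
    _ ≤ ∑ _l ∈ Finset.Icc 1 r, A * (2*M+A) * h ^ (r+1) := Finset.sum_le_sum hterm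
    _ = r * (A * (2*M+A) * h ^ (r+1)) := by
        rw [Finset.sum_const, Nat.card_Icc, nsmul_eq_mul]
        norm_num
    _ = r * (A * (2 * M + A)) * h ^ (r + 1) := by ring
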